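/- (Renormalization group equation for the Bogoliubov-type recursion in a Rota–Baxter algebra, degree-wise form.) Let A be an associative unital algebra over ℚ, let R : A → A be a Rota–Baxter operator of weight 1, and let a ∈ A. Define the sequence (c_n)_{n≥0} by c_0 = 1 and c_n := R(c_{n−1}·a) for n ≥ 1 (the coefficients of the solution X(λ) = 1 + R(X(λ)·λa)), and define the pre-Lie iterates (ℓ_n)_{n≥1} by ℓ_1 := a and ℓ_{n+1} := ℓ_n • a = R(ℓ_n)·a − a·R(ℓ_n) + a·ℓ_n. Then for every n ≥ 1: n·c_n = Σ_{i=1}^{n} c_{n−i}·R(ℓ_i). -/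
import Mathlib


/-- degree-wise RG equation for the Bogoliubov-type recursion in a
Rota–Baxter algebra: if `R` is a Rota–Baxter operator of weight 1 on a unital
associative `ℚ`-algebra `A`, `c₀ = 1`, `cₙ = R(c_{n−1}·a)`, `ℓ₁ = a` and
`ℓ_{n+1} = ℓ_n • a = R(ℓ_n)·a − a·R(ℓ_n) + a·ℓ_n`, then
`n·cₙ = Σ_{i=1}^n c_{n−i}·R(ℓᵢ)`. -/
theorem bogoliubov_RG_recursion {A : Type*} [Ring A] [Algebra ℚ A]
    (R : A →ₗ[ℚ] A)
    (hR : ∀ x y : A, R x * R y + R (x * y) = R (R x * y + x * R y))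
    (a : A) (c : ℕ → A) (l : ℕ → A)
    (hc0 : c 0 = 1)
    (hc : ∀ n : ℕ, 1 ≤ n → c n = R (c (n - 1) * a))
    (hl1 : l 1 = a)
    (hl : ∀ n : ℕ, 1 ≤ n → l (n + 1) = R (l n) * a - a * R (l n) + a * l n) :
    ∀ n : ℕ, 1 ≤ n → n • c n = ∑ i ∈ Finset.Icc 1 n, c (n - i) * R (l i) := by
  have hc1 : ∀ m : ℕ, c (m + 1) = R (c m * a) := by
    intro m
    simpa using hc (m + 1) (Nat.le_add_left 1 m)
  have hIcc : ∀ (m : ℕ) (f : ℕ → A),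
      ∑ i ∈ Finset.Icc 1 m, f i = ∑ j ∈ Finset.range m, f (j + 1) := by
    intro m f
    rw [← Finset.Ico_add_one_right_eq_Icc, Finset.sum_Ico_eq_sum_range]
    simp [add_comm]
  have hRB : ∀ x y : A, R x * R y = R (R x * y + x * R y - x * y) := by
    intro x y
    rw [map_sub, ← hR x y]
    abel
  intro n hn
  induction n, hn using Nat.le_induction with
  | base =>
    rw [hIcc]
    simp [hc1, hc0, hl1]
  | succ n hn ih =>
    rw [hIcc] at ih ⊢
    obtain ⟨m, rfl⟩ : ∃ m, n = m + 1 := ⟨n - 1, by omega⟩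
    set N := m + 1 with hN
    have key : l (N + 1) + ∑ j ∈ Finset.range N, c (N - j) * l (j + 1)
        = c N * a + ∑ j ∈ Finset.range N,
            c (N - (j + 1)) * (R (l (j + 1)) * a - a * R (l (j + 1)) + a * l (j + 1)) := by
      rw [Finset.sum_range_succ' (fun j => c (N - j) * l (j + 1)) m,
        Finset.sum_range_succ]
      have h1 : N - (m + 1) = 0 := by omega
      rw [h1, hc0, one_mul, ← hl (m + 1) (Nat.le_add_left 1 m)]
      have h2 : ∀ j ∈ Finset.range m, c (N - (j + 1)) * l (j + 1 + 1)
          = c (N - (j + 1)) * (R (l (j + 1)) * a - a * R (l (j + 1)) + a * l (j + 1)) := by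
        intro j hj
        rw [hl (j + 1) (Nat.le_add_left 1 j)]
      rw [Finset.sum_congr rfl h2]
      have h3 : N - 0 = N := rfl
      rw [h3, hl1]
      abel
    have comb : ∑ j ∈ Finset.range N, c (N - (j + 1)) * R (l (j + 1)) * a
        = ∑ j ∈ Finset.range N,
            (c (N - (j + 1)) * (R (l (j + 1)) * a - a * R (l (j + 1)) + a * l (j + 1))
             + c (N - (j + 1)) * (a * R (l (j + 1)))
             - c (N - (j + 1)) * (a * l (j + 1))) := by
      refine Finset.sum_congr rfl fun j hj => ?_
      noncomm_ring
    have arg : (∑ j ∈ Finset.range N, c (N - (j + 1)) * R (l (j + 1))) * a + c N * a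
        = ∑ j ∈ Finset.range N, (c (N - j) * l (j + 1)
            + c (N - (j + 1)) * (a * R (l (j + 1)))
            - c (N - (j + 1)) * (a * l (j + 1))) + l (N + 1) := by
      rw [Finset.sum_mul]
      rw [comb, Finset.sum_sub_distrib, Finset.sum_add_distrib,
        Finset.sum_sub_distrib, Finset.sum_add_distrib]
      have key' : ∑ j ∈ Finset.range N, c (N - j) * l (j + 1)
          = c N * a + (∑ j ∈ Finset.range N,
              c (N - (j + 1)) * (R (l (j + 1)) * a - a * R (l (j + 1)) + a * l (j + 1))) - l (N + 1) := by
        rw [← key]; abel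
      rw [key']
      abel
    calc (N + 1) • c (N + 1)
        = R ((N • c N) * a + c N * a) := by
          rw [hc1 N, ← map_nsmul, succ_nsmul, smul_mul_assoc]
      _ = R (∑ j ∈ Finset.range N, (c (N - j) * l (j + 1)
            + c (N - (j + 1)) * (a * R (l (j + 1)))
            - c (N - (j + 1)) * (a * l (j + 1))) + l (N + 1)) := by
          rw [ih, arg]
      _ = ∑ j ∈ Finset.range (N + 1), c (N + 1 - (j + 1)) * R (l (j + 1)) := by
          rw [map_add, map_sum]
          conv_rhs => rw [Finset.sum_range_succ]
          congr 1
          · refine Finset.sum_congr rfl fun j hj => ?_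
            have hj' : j < N := Finset.mem_range.mp hj
            have h1 : N + 1 - (j + 1) = (N - (j + 1)) + 1 := by omega
            have h2 : N - j = (N - (j + 1)) + 1 := by omega
            rw [h1, hc1 (N - (j + 1)), hRB, h2, hc1 (N - (j + 1))]
            congr 1
            noncomm_ring
          · have h0 : N + 1 - (N + 1) = 0 := by omega
            rw [h0, hc0, one_mul]
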